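/- Let a_k = 1/(k+1) for k ≥ 0 and let λ ∈ (0,1]. Then for all integers n > n₀ ≥ 1: for every n₀ ≤ k ≤ n−2 one has exp(−λ Σ_{i=k+1}^{n−1} a_i) a_k ≥ exp(−λ Σ_{i=k+2}^{n−1} a_i) a_{k+1}, so that β_n := max_{n₀ ≤ k ≤ n−1} [ exp(−λ Σ_{i=k+1}^{n−1} a_i) · a_k ] = exp(−λ Σ_{i=n₀+1}^{n−1} a_i) · a_{n₀}, and moreover β_n ≤ 2 / ( (n+1)^λ · n₀^{1−λ} ). -/

import Mathlib

private lemma sumlog19 (N : ℕ) : ∀ m : ℕ, m ≤ N + 1 →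
    Real.log ((N : ℝ) + 2) - Real.log ((m : ℝ) + 1) ≤
      ∑ i ∈ Finset.Icc m N, (1 : ℝ) / ((i : ℝ) + 1) := by
  induction N with
  | zero =>
    intro m hm
    interval_cases m
    · simp only [Finset.Icc_self, Finset.sum_singleton, Nat.cast_zero]
      norm_num
      linarith [Real.log_two_lt_d9]
    · rw [Finset.Icc_eq_empty (by omega)]
      norm_num
  | succ N ih =>
    intro m hm
    rcases Nat.lt_or_ge m (N + 2) with h | h
    · have hm' : m ≤ N + 1 := by omega
      rw [Finset.sum_Icc_succ_top (by omega : m ≤ N + 1)]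
      have key : Real.log ((N : ℝ) + 3) - Real.log ((N : ℝ) + 2) ≤ 1 / ((N : ℝ) + 2) := by
        have h1 : Real.log (((N : ℝ) + 3) / ((N : ℝ) + 2)) ≤ ((N : ℝ) + 3) / ((N : ℝ) + 2) - 1 :=
          Real.log_le_sub_one_of_pos (by positivity)
        rw [Real.log_div (by positivity) (by positivity)] at h1
        have : ((N : ℝ) + 3) / ((N : ℝ) + 2) - 1 = 1 / ((N : ℝ) + 2) := by
          field_simp
          norm_num
        linarith [this ▸ h1]
      have := ih m hm'
      push_cast
      push_cast at this key
      ring_nf at this key ⊢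
      have hs : ∑ x ∈ Finset.Icc m N, (1 + (x : ℝ))⁻¹ = ∑ x ∈ Finset.Icc m N, 1 / ((x : ℝ) + 1) := by
        apply Finset.sum_congr rfl
        intros
        ring
      linarith
    · have hme : m = N + 2 := by omega
      subst hme
      rw [Finset.Icc_eq_empty (by omega)]
      push_cast
      norm_num
      ring_nf
      exact le_refl _

private lemma steplem19 (lam : ℝ) (hlam : lam ∈ Set.Ioc (0:ℝ) 1) (n k : ℕ) (hk : k + 1 ≤ n - 1) :
    Real.exp (-lam * ∑ i ∈ Finset.Icc (k + 2) (n - 1), (1:ℝ)/((i:ℝ)+1)) * (1/(((k+1 : ℕ) : ℝ)+1)) ≤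
      Real.exp (-lam * ∑ i ∈ Finset.Icc (k + 1) (n - 1), (1:ℝ)/((i:ℝ)+1)) * (1/((k:ℝ)+1)) := by
  obtain ⟨hl0, hl1⟩ := hlam
  have hsplit : Finset.Icc (k + 1) (n - 1) = insert (k + 1) (Finset.Icc (k + 2) (n - 1)) := by
    ext x
    simp only [Finset.mem_Icc, Finset.mem_insert]
    omega
  have hnotmem : k + 1 ∉ Finset.Icc (k + 2) (n - 1) := by simp
  rw [hsplit, Finset.sum_insert hnotmem]
  set R := ∑ i ∈ Finset.Icc (k + 2) (n - 1), (1:ℝ)/((i:ℝ)+1) with hR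
  push_cast
  have e0 : ((k:ℝ)+1+1) = (k:ℝ)+2 := by ring
  rw [e0]
  have hsum : -lam * ((1:ℝ)/((k:ℝ)+2) + R) = -lam * (1/((k:ℝ)+2)) + -lam * R := by ring
  rw [hsum, Real.exp_add]
  have hE : 1 - lam / ((k:ℝ)+2) ≤ Real.exp (-lam * (1/((k:ℝ)+2))) := by
    have := Real.add_one_le_exp (-lam * (1/((k:ℝ)+2)))
    have he : -lam * (1/((k:ℝ)+2)) + 1 = 1 - lam/((k:ℝ)+2) := by ring
    linarith [he ▸ this]
  have hRpos : (0:ℝ) < Real.exp (-lam * R) := Real.exp_pos _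
  have hk2 : (0:ℝ) < (k:ℝ) + 2 := by positivity
  have hk1 : (0:ℝ) < (k:ℝ) + 1 := by positivity
  have key : 1/((k:ℝ)+2) ≤ Real.exp (-lam * (1/((k:ℝ)+2))) * (1/((k:ℝ)+1)) := by
    have h2 : (1 - lam/((k:ℝ)+2)) * (1/((k:ℝ)+1)) ≤
        Real.exp (-lam * (1/((k:ℝ)+2))) * (1/((k:ℝ)+1)) := by
      apply mul_le_mul_of_nonneg_right hE (by positivity)
    have h3 : 1/((k:ℝ)+2) ≤ (1 - lam/((k:ℝ)+2)) * (1/((k:ℝ)+1)) := by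
      have he : (1 - lam/((k:ℝ)+2)) * (1/((k:ℝ)+1)) = ((k:ℝ)+2-lam)/(((k:ℝ)+2)*((k:ℝ)+1)) := by
        field_simp
      rw [he, div_le_div_iff₀ hk2 (by positivity)]
      nlinarith
    linarith
  calc Real.exp (-lam * R) * (1/((k:ℝ)+2))
      ≤ Real.exp (-lam * R) * (Real.exp (-lam * (1/((k:ℝ)+2))) * (1/((k:ℝ)+1))) :=
        mul_le_mul_of_nonneg_left key hRpos.le
    _ = Real.exp (-lam * (1/((k:ℝ)+2))) * Real.exp (-lam * R) * (1/((k:ℝ)+1)) := by ring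

private lemma boundlem19 (lam : ℝ) (hlam : lam ∈ Set.Ioc (0:ℝ) 1) (n₀ n : ℕ)
    (h1 : 1 ≤ n₀) (h2 : n₀ < n) :
    Real.exp (-lam * ∑ i ∈ Finset.Icc (n₀ + 1) (n - 1), (1:ℝ)/((i:ℝ)+1)) * (1/((n₀:ℝ)+1)) ≤
      2 / (((n : ℝ) + 1) ^ lam * (n₀ : ℝ) ^ (1 - lam)) := by
  obtain ⟨hl0, hl1⟩ := hlam
  set S := ∑ i ∈ Finset.Icc (n₀ + 1) (n - 1), (1:ℝ)/((i:ℝ)+1) with hSdef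
  have hc : (((n - 1 : ℕ)) : ℝ) = (n : ℝ) - 1 := by
    have : (1:ℕ) ≤ n := by omega
    push_cast [Nat.cast_sub this]
    ring
  have hS : Real.log ((n:ℝ) + 1) - Real.log ((n₀:ℝ) + 2) ≤ S := by
    have := sumlog19 (n - 1) (n₀ + 1) (by omega)
    rw [hc] at this
    have e1 : (n:ℝ) - 1 + 2 = (n:ℝ) + 1 := by ring
    have e2 : ((n₀ + 1 : ℕ) : ℝ) + 1 = (n₀:ℝ) + 2 := by push_cast; ring
    rw [e1, e2] at this
    exact this
  have hn1 : (0:ℝ) < (n:ℝ) + 1 := by positivity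
  have hn02 : (0:ℝ) < (n₀:ℝ) + 2 := by positivity
  have hn01 : (0:ℝ) < (n₀:ℝ) + 1 := by positivity
  have hn0 : (0:ℝ) < (n₀:ℝ) := by exact_mod_cast h1
  have hexp : Real.exp (-lam * S) ≤ ((n₀:ℝ)+2)^lam / ((n:ℝ)+1)^lam := by
    have hmono : -lam * S ≤ -lam * (Real.log ((n:ℝ) + 1) - Real.log ((n₀:ℝ) + 2)) := by
      nlinarith
    have hform : Real.exp (-lam * (Real.log ((n:ℝ) + 1) - Real.log ((n₀:ℝ) + 2))) =
        ((n₀:ℝ)+2)^lam / ((n:ℝ)+1)^lam := by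
      rw [Real.rpow_def_of_pos hn02, Real.rpow_def_of_pos hn1, ← Real.exp_sub]
      ring_nf
    calc Real.exp (-lam * S) ≤ _ := Real.exp_le_exp.mpr hmono
      _ = _ := hform
  have hkey : ((n₀:ℝ)+2)^lam * (n₀:ℝ)^(1-lam) ≤ 2 * ((n₀:ℝ)+1) := by
    have e1 : ((n₀:ℝ)+2)^lam ≤ (2*((n₀:ℝ)+1))^lam :=
      Real.rpow_le_rpow hn02.le (by linarith) hl0.le
    have e2 : (2*((n₀:ℝ)+1))^lam = 2^lam * ((n₀:ℝ)+1)^lam :=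
      Real.mul_rpow (by norm_num) hn01.le
    have e3 : (2:ℝ)^lam ≤ 2 := by
      calc (2:ℝ)^lam ≤ (2:ℝ)^(1:ℝ) := Real.rpow_le_rpow_of_exponent_le one_le_two hl1
        _ = 2 := Real.rpow_one 2
    have e4 : (n₀:ℝ)^(1-lam) ≤ ((n₀:ℝ)+1)^(1-lam) :=
      Real.rpow_le_rpow hn0.le (by linarith) (by linarith)
    have e5 : ((n₀:ℝ)+1)^lam * ((n₀:ℝ)+1)^(1-lam) = (n₀:ℝ)+1 := by
      rw [← Real.rpow_add hn01]
      norm_num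
    have p2 : (0:ℝ) ≤ (n₀:ℝ)^(1-lam) := by positivity
    calc ((n₀:ℝ)+2)^lam * (n₀:ℝ)^(1-lam)
        ≤ (2^lam * ((n₀:ℝ)+1)^lam) * ((n₀:ℝ)+1)^(1-lam) := by
          apply mul_le_mul (e2 ▸ e1) e4 p2 (by positivity)
      _ = 2^lam * (((n₀:ℝ)+1)^lam * ((n₀:ℝ)+1)^(1-lam)) := by ring
      _ = 2^lam * ((n₀:ℝ)+1) := by rw [e5]
      _ ≤ 2 * ((n₀:ℝ)+1) := by
          apply mul_le_mul_of_nonneg_right e3 hn01.le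
  have pB : (0:ℝ) < ((n:ℝ)+1)^lam := by positivity
  have hfinal : ((n₀:ℝ)+2)^lam / ((n:ℝ)+1)^lam * (1/((n₀:ℝ)+1)) ≤
      2 / (((n:ℝ)+1)^lam * (n₀:ℝ)^(1-lam)) := by
    rw [div_mul_div_comm, mul_one, div_le_div_iff₀ (by positivity) (by positivity)]
    calc ((n₀:ℝ)+2)^lam * (((n:ℝ)+1)^lam * (n₀:ℝ)^(1-lam))
        = (((n₀:ℝ)+2)^lam * (n₀:ℝ)^(1-lam)) * ((n:ℝ)+1)^lam := by ring
      _ ≤ (2 * ((n₀:ℝ)+1)) * ((n:ℝ)+1)^lam := mul_le_mul_of_nonneg_right hkey pB.le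
      _ = 2 * (((n:ℝ)+1)^lam * ((n₀:ℝ)+1)) := by ring
  calc Real.exp (-lam * S) * (1/((n₀:ℝ)+1))
      ≤ ((n₀:ℝ)+2)^lam / ((n:ℝ)+1)^lam * (1/((n₀:ℝ)+1)) :=
        mul_le_mul_of_nonneg_right hexp (by positivity)
    _ ≤ _ := hfinal

/-- Let a_k = 1/(k+1) and λ ∈ (0,1]. Then for all n > n₀ ≥ 1: for every
n₀ ≤ k ≤ n−2, exp(−λ Σ_{i=k+1}^{n−1} a_i) a_k ≥ exp(−λ Σ_{i=k+2}^{n−1} a_i) a_{k+1},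
so that β_n := max_{n₀ ≤ k ≤ n−1} [exp(−λ Σ_{i=k+1}^{n−1} a_i) a_k]
= exp(−λ Σ_{i=n₀+1}^{n−1} a_i) a_{n₀}, and moreover β_n ≤ 2/((n+1)^λ n₀^{1−λ}). -/
theorem stmt19 (lam : ℝ) (hlam : lam ∈ Set.Ioc (0 : ℝ) 1)
    (a : ℕ → ℝ) (ha : ∀ k : ℕ, a k = 1 / ((k : ℝ) + 1)) :
    ∀ n₀ n : ℕ, 1 ≤ n₀ → n₀ < n →
      (∀ k : ℕ, n₀ ≤ k → k ≤ n - 2 →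
        Real.exp (-lam * ∑ i ∈ Finset.Icc (k + 2) (n - 1), a i) * a (k + 1) ≤
          Real.exp (-lam * ∑ i ∈ Finset.Icc (k + 1) (n - 1), a i) * a k) ∧
      IsGreatest
        ((fun k => Real.exp (-lam * ∑ i ∈ Finset.Icc (k + 1) (n - 1), a i) * a k) ''
          Set.Icc n₀ (n - 1))
        (Real.exp (-lam * ∑ i ∈ Finset.Icc (n₀ + 1) (n - 1), a i) * a n₀) ∧
      Real.exp (-lam * ∑ i ∈ Finset.Icc (n₀ + 1) (n - 1), a i) * a n₀ ≤
        2 / (((n : ℝ) + 1) ^ lam * (n₀ : ℝ) ^ (1 - lam)) := by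
  intro n₀ n hn₀ hn
  have hn2 : 2 ≤ n := by omega
  have hstep : ∀ k : ℕ, k + 1 ≤ n - 1 →
      Real.exp (-lam * ∑ i ∈ Finset.Icc (k + 2) (n - 1), a i) * a (k + 1) ≤
        Real.exp (-lam * ∑ i ∈ Finset.Icc (k + 1) (n - 1), a i) * a k := by
    intro k hk
    simpa only [ha] using steplem19 lam hlam n k hk
  refine ⟨fun k _ hk2 => hstep k (by omega), ⟨⟨n₀, ⟨le_refl _, by omega⟩, rfl⟩, ?_⟩, ?_⟩
  · rintro x ⟨k, ⟨hk1, hk2⟩, rfl⟩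
    simp only
    induction k, hk1 using Nat.le_induction with
    | base => exact le_refl _
    | succ k hk ih =>
      have h1 : Real.exp (-lam * ∑ i ∈ Finset.Icc (k + 1 + 1) (n - 1), a i) * a (k + 1) ≤
          Real.exp (-lam * ∑ i ∈ Finset.Icc (k + 1) (n - 1), a i) * a k := hstep k (by omega)
      exact le_trans h1 (ih (by omega))
  · simpa only [ha] using boundlem19 lam hlam n₀ n hn₀ hn
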